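/- Let V be a real Hilbert space whose inner product is the bilinear form a, with energy norm ‖·‖_V. Let u solve a(u,v)=f(v) for all v ∈ V, let u_ms ∈ V, let V_i be a closed subspace of V, and let φ ∈ V_i satisfy a(φ,v) = f(v) − a(u_ms,v) for all v ∈ V_i. Set α = a(u − u_ms, φ)/‖φ‖_V² (for φ ≠ 0). Then ‖u − (u_ms + α φ)‖_V² = ‖u − u_ms‖_V² − a(u − u_ms, φ)²/‖φ‖_V², and in particular since a(u − u_ms, φ) = ‖φ‖_V², ‖u − (u_ms + α φ)‖_V² = ‖u − u_ms‖_V² − ‖φ‖_V². -/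

import Mathlib

open RealInnerProductSpace

theorem stmt_5 {V : Type*} [NormedAddCommGroup V] [InnerProductSpace ℝ V] [CompleteSpace V]
    (Vi : Submodule ℝ V) (hViclosed : IsClosed (Vi : Set V))
    (f : V →L[ℝ] ℝ) (u u_ms φ : V)
    (hu : ∀ v, ⟪u, v⟫ = f v)
    (hφ : φ ∈ Vi) (hφeq : ∀ v ∈ Vi, ⟪φ, v⟫ = f v - ⟪u_ms, v⟫)
    (hφne : φ ≠ 0)
    (α : ℝ) (hα : α = ⟪u - u_ms, φ⟫ / ‖φ‖ ^ 2) :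
    ‖u - (u_ms + α • φ)‖ ^ 2 = ‖u - u_ms‖ ^ 2 - ⟪u - u_ms, φ⟫ ^ 2 / ‖φ‖ ^ 2 ∧
    ⟪u - u_ms, φ⟫ = ‖φ‖ ^ 2 ∧
    ‖u - (u_ms + α • φ)‖ ^ 2 = ‖u - u_ms‖ ^ 2 - ‖φ‖ ^ 2 := by
  have hφn : (0:ℝ) < ‖φ‖ := norm_pos_iff.mpr hφne
  have key : ⟪u - u_ms, φ⟫ = ‖φ‖ ^ 2 := by
    rw [inner_sub_left, hu φ, ← hφeq φ hφ, real_inner_self_eq_norm_sq]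
  have hrw : u - (u_ms + α • φ) = (u - u_ms) - α • φ := by abel
  have hexp : ‖u - (u_ms + α • φ)‖ ^ 2
      = ‖u - u_ms‖ ^ 2 - ⟪u - u_ms, φ⟫ ^ 2 / ‖φ‖ ^ 2 := by
    rw [hrw, norm_sub_sq_real, inner_smul_right, norm_smul, key, hα, key]
    have : ‖φ‖ ^ 2 ≠ 0 := by positivity
    field_simp
    rw [norm_one]
    ring
  refine ⟨hexp, key, ?_⟩
  rw [hexp, key]
  field_simp
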